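/- In a pOR net, for every place p there exist firing sequences witnessing [p_i] →* [p] and [p] →* [p_o], where p_i is an input place and p_o is an output place; consequently for any marking m with |m| = k, one has k.[p_i] →* m and m →* k.[p_o]. -/

import Mathlib

structure Net where
  P : Finset ℕ
  T : Finset ℕ
  F : Finset (ℕ × ℕ)
  I : Finset ℕ
  O : Finset ℕ

namespace Net

def nodes (N : Net) : Finset ℕ := N.P ∪ N.T

def IsPetri (N : Net) : Prop :=
  Disjoint N.P N.T ∧ ∀ e ∈ N.F, (e.1 ∈ N.P ∧ e.2 ∈ N.T) ∨ (e.1 ∈ N.T ∧ e.2 ∈ N.P)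

def edge (N : Net) (x y : ℕ) : Prop := (x, y) ∈ N.F

def pathReach (N : Net) : ℕ → ℕ → Prop := Relation.ReflTransGen N.edge

def Connected (N : Net) : Prop :=
  (∀ x ∈ N.nodes, ∃ i ∈ N.I, N.pathReach i x) ∧
  (∀ x ∈ N.nodes, ∃ o ∈ N.O, N.pathReach x o)

/-- place workflow net -/
def IsPWF (N : Net) : Prop :=
  N.IsPetri ∧ N.I ⊆ N.P ∧ N.O ⊆ N.P ∧ N.I.Nonempty ∧ N.O.Nonempty ∧ N.Connected

/-- transition workflow net -/
def IsTWF (N : Net) : Prop :=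
  N.IsPetri ∧ N.I ⊆ N.T ∧ N.O ⊆ N.T ∧ N.I.Nonempty ∧ N.O.Nonempty ∧ N.Connected

def IsWF (N : Net) : Prop := N.IsPWF ∨ N.IsTWF

abbrev Marking := ℕ → ℕ

def pre (N : Net) (t : ℕ) : Marking := fun p => if (p, t) ∈ N.F then 1 else 0
def post (N : Net) (t : ℕ) : Marking := fun p => if (t, p) ∈ N.F then 1 else 0
def enabled (N : Net) (t : ℕ) (m : Marking) : Prop := t ∈ N.T ∧ N.pre t ≤ m
def fire (N : Net) (t : ℕ) (m : Marking) : Marking := fun p => m p - N.pre t p + N.post t p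
def stepRel (N : Net) (m m' : Marking) : Prop := ∃ t, N.enabled t m ∧ m' = N.fire t m
def reach (N : Net) : Marking → Marking → Prop := Relation.ReflTransGen N.stepRel

/-- the marking with `k` tokens on each element of `S` -/
def bag (k : ℕ) (S : Finset ℕ) : Marking := fun p => if p ∈ S then k else 0

def kSound (N : Net) (k : ℕ) : Prop :=
  ∀ m, N.reach (bag k N.I) m → N.reach m (bag k N.O)

def starSound (N : Net) : Prop := ∀ k, 1 ≤ k → N.kSound k

def subSound (N : Net) : Prop :=
  ∀ k k' : ℕ, k' ≤ k → ∀ m : Marking,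
    N.reach (bag k N.I) (m + bag k' N.O) → N.reach m (bag (k - k') N.O)

/-- place completion of a tWF net -/
def pc (N : Net) (pi po : ℕ) : Net where
  P := insert pi (insert po N.P)
  T := N.T
  F := (N.I.image fun t => (pi, t)) ∪ (N.O.image fun t => (t, po)) ∪ N.F
  I := {pi}
  O := {po}

/-- transition completion of a pWF net -/
def tc (N : Net) (t_i t_o : ℕ) : Net where
  P := N.P
  T := insert t_i (insert t_o N.T)
  F := (N.I.image fun p => (t_i, p)) ∪ (N.O.image fun p => (p, t_o)) ∪ N.F
  I := {t_i}
  O := {t_o}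

/-- *-soundness of a tWF net: its place completion (for fresh names) is *-sound -/
def tStarSound (N : Net) : Prop :=
  ∀ pi po : ℕ, pi ∉ N.nodes → po ∉ N.nodes → pi ≠ po → (N.pc pi po).starSound

/-- sub-soundness of a tWF net: its place completion (for fresh names) is sub-sound -/
def tSubSound (N : Net) : Prop :=
  ∀ pi po : ℕ, pi ∉ N.nodes → po ∉ N.nodes → pi ≠ po → (N.pc pi po).subSound

/-- preset of a node, as a finset -/
def inEdges (N : Net) (n : ℕ) : Finset ℕ := (N.F.filter fun e => e.2 = n).image Prod.fst
/-- postset of a node, as a finset -/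
def outEdges (N : Net) (n : ℕ) : Finset ℕ := (N.F.filter fun e => e.1 = n).image Prod.snd

/-- substitution of the node `n` of `N` by the net `M` (place or transition substitution,
depending on the type of `n`): each input node of `M` inherits the preset of `n`, each
output node of `M` inherits the postset of `n`. -/
def subst (N : Net) (n : ℕ) (M : Net) : Net where
  P := (N.P.erase n) ∪ M.P
  T := (N.T.erase n) ∪ M.T
  F := (N.F.filter fun e => e.1 ≠ n ∧ e.2 ≠ n) ∪ M.F
        ∪ (N.inEdges n ×ˢ M.I) ∪ (M.O ×ˢ N.outEdges n)
  I := if n ∈ N.I then (N.I.erase n) ∪ M.I else N.I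
  O := if n ∈ N.O then (N.O.erase n) ∪ M.O else N.O

def Acyclic (N : Net) : Prop := ∀ x, ¬ Relation.TransGen N.edge x x

/-- AND net condition (on top of being a WF net) -/
def IsAND (N : Net) : Prop :=
  N.Acyclic ∧ ∀ p ∈ N.P,
    ((p ∈ N.I ∧ (N.inEdges p).card = 0) ∨ (p ∉ N.I ∧ (N.inEdges p).card = 1)) ∧
    ((p ∈ N.O ∧ (N.outEdges p).card = 0) ∨ (p ∉ N.O ∧ (N.outEdges p).card = 1))

/-- OR net condition (on top of being a WF net) -/
def IsOR (N : Net) : Prop :=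
  ∀ t ∈ N.T,
    ((t ∈ N.I ∧ (N.inEdges t).card = 0) ∨ (t ∉ N.I ∧ (N.inEdges t).card = 1)) ∧
    ((t ∈ N.O ∧ (N.outEdges t).card = 0) ∨ (t ∉ N.O ∧ (N.outEdges t).card = 1))

end Net

section StmtHelpers

open Net

lemma mem_inEdges_iff (N : Net) {p t : ℕ} : p ∈ N.inEdges t ↔ (p, t) ∈ N.F := by
  constructor
  · intro h
    simp only [Net.inEdges, Finset.mem_image, Finset.mem_filter] at h
    obtain ⟨⟨a, b⟩, ⟨hF, h2⟩, h1⟩ := h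
    simp_all
  · intro h
    simp only [Net.inEdges, Finset.mem_image, Finset.mem_filter]
    exact ⟨(p, t), ⟨h, rfl⟩, rfl⟩

lemma mem_outEdges_iff (N : Net) {t r : ℕ} : r ∈ N.outEdges t ↔ (t, r) ∈ N.F := by
  constructor
  · intro h
    simp only [Net.outEdges, Finset.mem_image, Finset.mem_filter] at h
    obtain ⟨⟨a, b⟩, ⟨hF, h2⟩, h1⟩ := h
    simp_all
  · intro h
    simp only [Net.outEdges, Finset.mem_image, Finset.mem_filter]
    exact ⟨(t, r), ⟨h, rfl⟩, rfl⟩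

lemma step_mono (N : Net) {m m' : Net.Marking} (c : Net.Marking) (h : N.stepRel m m') :
    N.stepRel (m + c) (m' + c) := by
  obtain ⟨t, ⟨ht, hpre⟩, rfl⟩ := h
  refine ⟨t, ⟨ht, fun p => le_trans (hpre p) (by simp)⟩, ?_⟩
  funext p
  have hle : N.pre t p ≤ m p := hpre p
  show (m p - N.pre t p + N.post t p) + c p = m p + c p - N.pre t p + N.post t p
  omega

lemma reach_add (N : Net) {m m' : Net.Marking} (c : Net.Marking) (h : N.reach m m') :
    N.reach (m + c) (m' + c) := by
  induction h with
  | refl => exact Relation.ReflTransGen.refl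
  | tail _ hstep ih => exact ih.tail (step_mono N c hstep)

lemma reach_add_reach (N : Net) {a a' b b' : Net.Marking}
    (h1 : N.reach a a') (h2 : N.reach b b') : N.reach (a + b) (a' + b') := by
  refine (reach_add N b h1).trans ?_
  rw [add_comm a' b, add_comm a' b']
  exact reach_add N a' h2

lemma fire_single (N : Net) (hN : N.IsPWF) (hOR : N.IsOR) {t q r : ℕ} (ht : t ∈ N.T)
    (hq : (q, t) ∈ N.F) (hr : (t, r) ∈ N.F) :
    N.stepRel (Net.bag 1 {q}) (Net.bag 1 {r}) := by
  have htI : t ∉ N.I := fun h => Finset.disjoint_left.mp hN.1.1 (hN.2.1 h) ht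
  have htO : t ∉ N.O := fun h => Finset.disjoint_left.mp hN.1.1 (hN.2.2.1 h) ht
  obtain ⟨hin, hout⟩ := hOR t ht
  have hin1 : (N.inEdges t).card = 1 := by rcases hin with ⟨h, _⟩ | ⟨_, h⟩ <;> tauto
  have hout1 : (N.outEdges t).card = 1 := by rcases hout with ⟨h, _⟩ | ⟨_, h⟩ <;> tauto
  obtain ⟨a, ha⟩ := Finset.card_eq_one.mp hin1
  obtain ⟨b, hb⟩ := Finset.card_eq_one.mp hout1
  have hqa : q = a := by
    have := (mem_inEdges_iff N).mpr hq; rw [ha] at this; simpa using this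
  have hrb : r = b := by
    have := (mem_outEdges_iff N).mpr hr; rw [hb] at this; simpa using this
  subst hqa hrb
  have hpre : N.pre t = Net.bag 1 {q} := by
    funext p
    simp only [Net.pre, Net.bag, Finset.mem_singleton]
    by_cases hp : (p, t) ∈ N.F
    · have : p ∈ N.inEdges t := (mem_inEdges_iff N).mpr hp
      rw [ha] at this; simp_all
    · have : p ∉ N.inEdges t := fun h => hp ((mem_inEdges_iff N).mp h)
      rw [ha] at this; simp_all
  have hpost : N.post t = Net.bag 1 {r} := by
    funext p
    simp only [Net.post, Net.bag, Finset.mem_singleton]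
    by_cases hp : (t, p) ∈ N.F
    · have : p ∈ N.outEdges t := (mem_outEdges_iff N).mpr hp
      rw [hb] at this; simp_all
    · have : p ∉ N.outEdges t := fun h => hp ((mem_outEdges_iff N).mp h)
      rw [hb] at this; simp_all
  refine ⟨t, ⟨ht, ?_⟩, ?_⟩
  · rw [hpre]
  · funext p
    simp only [Net.fire, hpre, hpost, Net.bag, Finset.mem_singleton]
    by_cases h1 : p = q <;> by_cases h2 : p = r <;> simp [h1, h2]

lemma reach_from_source (N : Net) (hN : N.IsPWF) (hOR : N.IsOR) {s x : ℕ}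
    (hs : s ∈ N.P) (hpath : N.pathReach s x) :
    (x ∈ N.P → N.reach (Net.bag 1 {s}) (Net.bag 1 {x})) ∧
    (x ∈ N.T → ∀ r, (x, r) ∈ N.F → N.reach (Net.bag 1 {s}) (Net.bag 1 {r})) := by
  have hdisj := hN.1.1
  induction hpath with
  | refl =>
    refine ⟨fun _ => Relation.ReflTransGen.refl, fun hT r _ => ?_⟩
    exact absurd hT (Finset.disjoint_left.mp hdisj hs)
  | tail _ hedge ih =>
    rename_i b c _
    rcases hN.1.2 _ hedge with ⟨hbP, hcT⟩ | ⟨hbT, hcP⟩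
    · refine ⟨fun hcP => absurd hcT (Finset.disjoint_left.mp hdisj hcP), fun _ r hr => ?_⟩
      exact (ih.1 hbP).tail (fire_single N hN hOR hcT hedge hr)
    · refine ⟨fun _ => ih.2 hbT c hedge, fun hcT => ?_⟩
      exact absurd hcT (Finset.disjoint_left.mp hdisj hcP)

lemma reach_to_sink (N : Net) (hN : N.IsPWF) (hOR : N.IsOR) {s x : ℕ}
    (hs : s ∈ N.P) (hpath : N.pathReach x s) :
    (x ∈ N.P → N.reach (Net.bag 1 {x}) (Net.bag 1 {s})) ∧
    (x ∈ N.T → ∀ q, (q, x) ∈ N.F → N.reach (Net.bag 1 {q}) (Net.bag 1 {s})) := by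
  have hdisj := hN.1.1
  induction hpath using Relation.ReflTransGen.head_induction_on with
  | refl =>
    refine ⟨fun _ => Relation.ReflTransGen.refl, fun hT q _ => ?_⟩
    exact absurd hT (Finset.disjoint_left.mp hdisj hs)
  | head hedge _ ih =>
    rename_i a b _
    rcases hN.1.2 _ hedge with ⟨haP, hbT⟩ | ⟨haT, hbP⟩
    · refine ⟨fun _ => ih.2 hbT a hedge, fun haT => ?_⟩
      exact absurd haT (Finset.disjoint_left.mp hdisj haP)
    · refine ⟨fun haP => absurd haT (Finset.disjoint_left.mp hdisj haP), fun _ q hq => ?_⟩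
      exact (Relation.ReflTransGen.single (fire_single N hN hOR haT hq hedge)).trans (ih.1 hbP)

lemma bag_add (a b : ℕ) (S : Finset ℕ) :
    Net.bag (a + b) S = Net.bag a S + Net.bag b S := by
  funext p; simp only [Net.bag, Pi.add_apply]; split <;> simp

lemma reach_bag_of_reach_one (N : Net) {p q : ℕ}
    (h : N.reach (Net.bag 1 {p}) (Net.bag 1 {q})) (n : ℕ) :
    N.reach (Net.bag n {p}) (Net.bag n {q}) := by
  induction n with
  | zero =>
    have : Net.bag 0 ({p} : Finset ℕ) = Net.bag 0 ({q} : Finset ℕ) := by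
      funext x; simp [Net.bag]
    rw [this]
    exact Relation.ReflTransGen.refl
  | succ n ih =>
    have h1 : Net.bag (n + 1) ({p} : Finset ℕ) = Net.bag n {p} + Net.bag 1 {p} := bag_add n 1 _
    have h2 : Net.bag (n + 1) ({q} : Finset ℕ) = Net.bag n {q} + Net.bag 1 {q} := bag_add n 1 _
    rw [h1, h2]
    exact reach_add_reach N ih h

lemma reach_sum (N : Net) (S : Finset ℕ) (f g : ℕ → Net.Marking)
    (h : ∀ p ∈ S, N.reach (f p) (g p)) :
    N.reach (∑ p ∈ S, f p) (∑ p ∈ S, g p) := by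
  induction S using Finset.induction_on with
  | empty => simp; exact Relation.ReflTransGen.refl
  | insert _ _ hx ih =>
    rename_i a s
    rw [Finset.sum_insert hx, Finset.sum_insert hx]
    exact reach_add_reach N (h a (Finset.mem_insert_self a s))
      (ih fun p hp => h p (Finset.mem_insert_of_mem hp))

end StmtHelpers

theorem stmt18 (N : Net) (hN : N.IsPWF) (hOR : N.IsOR)
    (pi po : ℕ) (hpi : N.I = {pi}) (hpo : N.O = {po}) :
    (∀ p ∈ N.P, N.reach (Net.bag 1 {pi}) (Net.bag 1 {p}) ∧
      N.reach (Net.bag 1 {p}) (Net.bag 1 {po})) ∧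
    (∀ (k : ℕ) (m : Net.Marking), (∀ x, x ∉ N.P → m x = 0) → (∑ q ∈ N.P, m q) = k →
      N.reach (Net.bag k {pi}) m ∧ N.reach m (Net.bag k {po})) := by
  have hdisj := hN.1.1
  have hIP : N.I ⊆ N.P := hN.2.1
  have hOP : N.O ⊆ N.P := hN.2.2.1
  have hconn : N.Connected := hN.2.2.2.2.2
  have hpiP : pi ∈ N.P := hIP (by simp [hpi])
  have hpoP : po ∈ N.P := hOP (by simp [hpo])
  have key : ∀ p ∈ N.P, N.reach (Net.bag 1 {pi}) (Net.bag 1 {p}) ∧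
      N.reach (Net.bag 1 {p}) (Net.bag 1 {po}) := by
    intro p hp
    have hnode : p ∈ N.nodes := Finset.mem_union_left _ hp
    obtain ⟨i, hi, hpath1⟩ := hconn.1 p hnode
    obtain ⟨o, ho, hpath2⟩ := hconn.2 p hnode
    rw [hpi, Finset.mem_singleton] at hi
    rw [hpo, Finset.mem_singleton] at ho
    subst hi; subst ho
    exact ⟨(reach_from_source N hN hOR hpiP hpath1).1 hp,
           (reach_to_sink N hN hOR hpoP hpath2).1 hp⟩
  refine ⟨key, ?_⟩
  intro k m hsupp hsum
  have hm : (∑ q ∈ N.P, Net.bag (m q) {q}) = m := by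
    funext x
    rw [Finset.sum_apply]
    simp only [Net.bag, Finset.mem_singleton]
    rw [Finset.sum_ite_eq]
    by_cases hx : x ∈ N.P
    · simp [hx]
    · simp [hx, hsupp x hx]
  have hin : (∑ q ∈ N.P, Net.bag (m q) ({pi} : Finset ℕ)) = Net.bag k {pi} := by
    funext x
    rw [Finset.sum_apply]
    simp only [Net.bag]
    by_cases hx : x ∈ ({pi} : Finset ℕ)
    · simp [hx, hsum]
    · simp [hx]
  have hout : (∑ q ∈ N.P, Net.bag (m q) ({po} : Finset ℕ)) = Net.bag k {po} := by
    funext x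
    rw [Finset.sum_apply]
    simp only [Net.bag]
    by_cases hx : x ∈ ({po} : Finset ℕ)
    · simp [hx, hsum]
    · simp [hx]
  constructor
  · have h := reach_sum N N.P _ _
      (fun p hp => reach_bag_of_reach_one N ((key p hp).1) (m p))
    rwa [hin, hm] at h
  · have h := reach_sum N N.P _ _
      (fun p hp => reach_bag_of_reach_one N ((key p hp).2) (m p))
    rwa [hout, hm] at h
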